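/- arXiv:1910.04477 — 3 statements merged into one kernel-verified Lean document; each statement's English description precedes it below -/
import Mathlib

section
/- Let d = 2 or d = 3 and assume that the potential φ satisfies the confinement assumption (C). Then the solution (n_∞, c_∞) of the Poisson–Boltzmann equation is such that c_∞ is bounded (with 0 ≤ c_∞) if d = 3, and ‖∇c_∞‖_{L^q(ℝ²)} is finite for every q ∈ (2, +∞] if d = 2. -/
open MeasureTheory Filter
open scoped ENNReal RealInnerProductSpace

noncomputable section

/-- Euclidean space `ℝ^d`. -/
abbrev Euc (d : ℕ) := EuclideanSpace ℝ (Fin d)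

/-- Green function of the Laplacian on `ℝ^d` for `d = 2` or `d = 3`. -/
def Gker (d : ℕ) (x : Euc d) : ℝ :=
  if d = 2 then -(1 / (2 * Real.pi)) * Real.log ‖x‖ else 1 / (4 * Real.pi * ‖x‖)

/-- Newtonian potential `G_d * ρ`. -/
def newt (d : ℕ) (ρ : Euc d → ℝ) (x : Euc d) : ℝ := ∫ y, Gker d (x - y) * ρ y

/-- `i`-th partial derivative. -/
def pd {d : ℕ} (i : Fin d) (f : Euc d → ℝ) (x : Euc d) : ℝ :=
  fderiv ℝ f x (EuclideanSpace.single i 1)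

/-- Laplacian as the sum of the second partial derivatives. -/
def lap {d : ℕ} (f : Euc d → ℝ) (x : Euc d) : ℝ := ∑ i, pd i (pd i f) x

/-- Divergence of a vector field. -/
def divg {d : ℕ} (V : Euc d → Euc d) (x : Euc d) : ℝ := ∑ i, pd i (fun y => V y i) x

/-- The confinement assumption (C): `φ` is locally `W^{1,∞}` with `∇φ ∈ W^{1,∞}`
(gradient bounded and Lipschitz), together with (C1), (C3) and (C4). -/
def ConfC (d : ℕ) (M : ℝ) (φ : Euc d → ℝ) : Prop :=
  Differentiable ℝ φ
  ∧ (∃ L : NNReal, LipschitzWith L (gradient φ))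
  ∧ (∃ K : ℝ, ∀ x, ‖gradient φ x‖ ≤ K)
  -- (C1): liminf_{|x|→∞} φ(x)/log|x| > d
  ∧ (∃ a : ℝ, (d : ℝ) < a ∧ ∀ᶠ x in cocompact (Euc d), a * Real.log ‖x‖ ≤ φ x)
  -- (C3)
  ∧ (∃ σ > (0:ℝ), ∀ᶠ x in cocompact (Euc d), σ ≤ ‖gradient φ x‖ ^ 2 / 4 - lap φ x / 2)
  ∧ (∃ δ > (0:ℝ), ∀ᶠ x in cocompact (Euc d), δ ≤ ‖gradient φ x‖)
  -- (C4): if d = 2, liminf_{|x|→∞} φ(x)/log|x| > 4 + M/(2π)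
  ∧ (d = 2 → ∃ a : ℝ, 4 + M / (2 * Real.pi) < a ∧
      ∀ᶠ x in cocompact (Euc d), a * Real.log ‖x‖ ≤ φ x)

/-- The free energy `F[n]`. -/
def freeEnergy (d : ℕ) (φ n : Euc d → ℝ) : ℝ :=
  (∫ x, n x * Real.log (n x)) + (∫ x, n x * φ x) + (1 / 2) * ∫ x, n x * newt d n x

/-- Membership in the set `X` of admissible densities of mass `M`. -/
def memX (d : ℕ) (M : ℝ) (φ n : Euc d → ℝ) : Prop :=
  (∀ x, 0 ≤ n x) ∧ Integrable n ∧ (∫ x, n x) = M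
  ∧ Integrable (fun x => n x * Real.log (n x)) ∧ Integrable (fun x => n x * φ x)

/-- Finiteness of the free energy: all three integrands are integrable. -/
def FiniteFreeEnergy (d : ℕ) (φ n : Euc d → ℝ) : Prop :=
  Integrable (fun x => n x * Real.log (n x)) ∧ Integrable (fun x => n x * φ x)
  ∧ Integrable (fun x => n x * newt d n x)

/-- `(n∞, c∞)` is the stationary solution: `c∞ = G_d * n∞` solves the
Poisson-Boltzmann equation `−Δc∞ = n∞ = M e^{−c∞−φ}/∫ e^{−c∞−φ}`. -/
def IsSteadyState (d : ℕ) (M : ℝ) (φ nS cS : Euc d → ℝ) : Prop :=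
  (∀ x, cS x = newt d nS x) ∧ (∀ x, -lap cS x = nS x)
  ∧ ∀ x, nS x = M * Real.exp (-cS x - φ x) / ∫ y, Real.exp (-cS y - φ y)

/-- `n` solves the Poisson–Nernst–Planck system with confinement potential `φ`:
`∂n/∂t = Δn + ∇·(n∇c) + ∇·(n∇φ)` with `c(t,·) = G_d * n(t,·)`. -/
def IsPNPSol (d : ℕ) (φ : Euc d → ℝ) (n : ℝ → Euc d → ℝ) : Prop :=
  ∀ t > (0:ℝ), ∀ x,
    deriv (fun s => n s x) t =
      lap (n t) x
      + divg (fun y => n t y • gradient (newt d (n t)) y) x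
      + divg (fun y => n t y • gradient φ y) x

open Metric Set

lemma integrableOn_inv_norm_ball (d : ℕ) (hd : 2 ≤ d) :
    IntegrableOn (fun z : Euc d => ‖z‖⁻¹) (ball (0 : Euc d) 1) volume := by
  have hdim : Module.finrank ℝ (Euc d) = d := finrank_euclideanSpace_fin
  have hmeas : Measurable (fun z : Euc d => ‖z‖⁻¹) := by fun_prop
  refine ⟨hmeas.aestronglyMeasurable.restrict, ?_⟩
  rw [hasFiniteIntegral_iff_ofReal (Eventually.of_forall fun z => by positivity)]
  rw [lintegral_eq_lintegral_meas_le _ (Eventually.of_forall fun z => by positivity)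
    (hmeas.aemeasurable.restrict)]
  set ν := volume.restrict (ball (0 : Euc d) 1) with hν
  have hsub : ∀ t : ℝ, 0 < t →
      {a : Euc d | t ≤ ‖a‖⁻¹} ⊆ closedBall (0 : Euc d) t⁻¹ := by
    intro t ht a ha
    simp only [mem_setOf_eq] at ha
    rw [mem_closedBall_zero_iff]
    rcases eq_or_ne a 0 with rfl | h0
    · simp [ht.le, inv_nonneg]
    · have hn : 0 < ‖a‖ := norm_pos_iff.2 h0
      rwa [le_inv_comm₀ ht hn] at ha
  calc ∫⁻ t in Ioi (0:ℝ), ν {a | t ≤ ‖a‖⁻¹}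
      ≤ ∫⁻ t in Ioc (0:ℝ) 1 ∪ Ioi 1, ν {a | t ≤ ‖a‖⁻¹} :=
        lintegral_mono_set Ioi_subset_Ioc_union_Ioi
    _ ≤ (∫⁻ t in Ioc (0:ℝ) 1, ν {a | t ≤ ‖a‖⁻¹}) + ∫⁻ t in Ioi (1:ℝ), ν {a | t ≤ ‖a‖⁻¹} :=
        lintegral_union_le _ _ _
    _ < ∞ := by
        refine ENNReal.add_lt_top.2 ⟨?_, ?_⟩
        · calc (∫⁻ t in Ioc (0:ℝ) 1, ν {a | t ≤ ‖a‖⁻¹})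
              ≤ ∫⁻ _ in Ioc (0:ℝ) 1, volume (ball (0 : Euc d) 1) := by
                refine lintegral_mono fun t => ?_
                exact le_trans (measure_mono (subset_univ _)) (by rw [hν, Measure.restrict_apply_univ])
            _ < ∞ := by
                rw [setLIntegral_const]
                exact ENNReal.mul_lt_top measure_ball_lt_top (by simp [Real.volume_Ioc])
        · have hlt : -(d:ℝ) < -1 := by
            have : (1:ℝ) < d := by exact_mod_cast lt_of_lt_of_le one_lt_two hd
            linarith
          calc (∫⁻ t in Ioi (1:ℝ), ν {a | t ≤ ‖a‖⁻¹})
              ≤ ∫⁻ t in Ioi (1:ℝ), ENNReal.ofReal (t ^ (-(d:ℝ))) * volume (ball (0 : Euc d) 1) := by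
                refine setLIntegral_mono' measurableSet_Ioi fun t ht => ?_
                have ht0 : (0:ℝ) < t := lt_trans zero_lt_one ht
                have h1 : ν {a : Euc d | t ≤ ‖a‖⁻¹} ≤ volume (closedBall (0 : Euc d) t⁻¹) :=
                  le_trans (Measure.restrict_le_self _) (measure_mono (hsub t ht0))
                have h2 : volume (closedBall (0 : Euc d) t⁻¹) =
                    ENNReal.ofReal (t⁻¹ ^ Module.finrank ℝ (Euc d)) * volume (ball (0 : Euc d) 1) :=
                  Measure.addHaar_closedBall _ _ (by positivity)
                have h3 : t⁻¹ ^ Module.finrank ℝ (Euc d) = t ^ (-(d:ℝ)) := by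
                  rw [hdim, inv_pow, ← Real.rpow_natCast t d, ← Real.rpow_neg ht0.le]
                rw [h2, h3] at h1
                exact h1
            _ < ∞ := by
                rw [lintegral_mul_const' _ _ measure_ball_lt_top.ne]
                exact ENNReal.mul_lt_top
                  ((integrableOn_Ioi_rpow_of_lt hlt zero_lt_one).setLIntegral_lt_top)
                  measure_ball_lt_top

lemma indicator_inv_comp_sub (d : ℕ) (ξ : Euc d) :
    (fun y : Euc d => (ball (0 : Euc d) 1).indicator (fun z => ‖z‖⁻¹) (ξ - y))
      = (ball ξ 1).indicator (fun y => ‖ξ - y‖⁻¹) := by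
  funext y
  have hmem : ξ - y ∈ ball (0 : Euc d) 1 ↔ y ∈ ball ξ 1 := by
    rw [mem_ball_zero_iff, mem_ball, dist_eq_norm, norm_sub_rev]
  by_cases h : y ∈ ball ξ 1
  · rw [indicator_of_mem (hmem.2 h), indicator_of_mem h]
  · rw [indicator_of_notMem (fun hc => h (hmem.1 hc)), indicator_of_notMem h]

lemma integrableOn_inv_norm_ball' (d : ℕ) (hd : 2 ≤ d) (ξ : Euc d) :
    IntegrableOn (fun y : Euc d => ‖ξ - y‖⁻¹) (ball ξ 1) volume := by
  have h0 : Integrable ((ball (0 : Euc d) 1).indicator fun z => ‖z‖⁻¹) volume :=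
    (integrableOn_inv_norm_ball d hd).integrable_indicator measurableSet_ball
  have h1 := h0.comp_sub_left ξ
  rw [indicator_inv_comp_sub d ξ] at h1
  exact (integrable_indicator_iff measurableSet_ball).1 h1

lemma integral_inv_norm_ball' (d : ℕ) (ξ : Euc d) :
    ∫ y in ball ξ 1, ‖ξ - y‖⁻¹ = ∫ z in ball (0 : Euc d) 1, ‖z‖⁻¹ := by
  rw [← integral_indicator measurableSet_ball, ← indicator_inv_comp_sub d ξ,
    integral_sub_left_eq_self _ _ ξ, integral_indicator measurableSet_ball]

lemma exp_neg_phi_bound (d : ℕ) {φ : Euc d → ℝ} (hcont : Continuous φ) {a : ℝ} (ha : 0 ≤ a)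
    (hev : ∀ᶠ x in cocompact (Euc d), a * Real.log ‖x‖ ≤ φ x) :
    ∃ C : ℝ, 0 < C ∧ ∀ x, Real.exp (-φ x) ≤ C * (1 + ‖x‖) ^ (-a) := by
  obtain ⟨K, hK, hKsub⟩ := mem_cocompact.mp hev
  obtain ⟨R, hRsub⟩ := hK.isBounded.subset_closedBall 0
  set R' : ℝ := max R 1 with hR'
  have hR1 : (1:ℝ) ≤ R' := le_max_right _ _
  obtain ⟨C₀, hC₀⟩ := (isCompact_closedBall (0 : Euc d) R').exists_bound_of_continuousOn
    hcont.continuousOn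
  refine ⟨max (Real.exp C₀ * (1 + R') ^ a) (2 ^ a), by positivity, fun x => ?_⟩
  by_cases hx : ‖x‖ ≤ R'
  · have h1 : Real.exp (-φ x) ≤ Real.exp C₀ := by
      apply Real.exp_le_exp.2
      have := hC₀ x (by rwa [mem_closedBall_zero_iff])
      rw [Real.norm_eq_abs] at this
      linarith [neg_abs_le (φ x), abs_nonneg (φ x)]
    have h2 : (1 + R' : ℝ) ^ (-a) ≤ (1 + ‖x‖) ^ (-a) :=
      Real.rpow_le_rpow_of_nonpos (by positivity) (by linarith) (by linarith)
    calc Real.exp (-φ x) ≤ Real.exp C₀ := h1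
      _ = Real.exp C₀ * (1 + R') ^ a * (1 + R') ^ (-a) := by
          rw [mul_assoc, ← Real.rpow_add (by positivity), add_neg_cancel, Real.rpow_zero, mul_one]
      _ ≤ max (Real.exp C₀ * (1 + R') ^ a) (2 ^ a) * (1 + ‖x‖) ^ (-a) := by
          apply mul_le_mul (le_max_left _ _) h2 (by positivity) (by positivity)
  · have hxK : x ∈ Kᶜ := fun hc => hx (mem_closedBall_zero_iff.1 (hRsub hc) |>.trans (le_max_left _ _))
    have hφx : a * Real.log ‖x‖ ≤ φ x := hKsub hxK
    have hx1 : (1:ℝ) < ‖x‖ := lt_of_le_of_lt hR1 (lt_of_not_ge hx)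
    have hx0 : (0:ℝ) < ‖x‖ := lt_trans zero_lt_one hx1
    have h1 : Real.exp (-φ x) ≤ ‖x‖ ^ (-a) := by
      rw [Real.rpow_def_of_pos hx0]
      apply Real.exp_le_exp.2
      rw [mul_comm]
      linarith
    have h2 : ‖x‖ ^ (-a) ≤ 2 ^ a * (1 + ‖x‖) ^ (-a) := by
      have hle : (1 + ‖x‖ : ℝ) ≤ 2 * ‖x‖ := by linarith
      have h3 : (2 * ‖x‖ : ℝ) ^ (-a) ≤ (1 + ‖x‖) ^ (-a) :=
        Real.rpow_le_rpow_of_nonpos (by positivity) hle (by linarith)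
      have h4 : (2 * ‖x‖ : ℝ) ^ (-a) = 2 ^ (-a) * ‖x‖ ^ (-a) :=
        Real.mul_rpow (by norm_num) hx0.le
      calc ‖x‖ ^ (-a) = 2 ^ a * (2 ^ (-a) * ‖x‖ ^ (-a)) := by
            rw [← mul_assoc, ← Real.rpow_add (by norm_num : (0:ℝ) < 2), add_neg_cancel,
              Real.rpow_zero, one_mul]
        _ ≤ 2 ^ a * (1 + ‖x‖) ^ (-a) := by
            rw [← h4]
            exact mul_le_mul_of_nonneg_left h3 (by positivity)
    calc Real.exp (-φ x) ≤ 2 ^ a * (1 + ‖x‖) ^ (-a) := h1.trans h2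
      _ ≤ max (Real.exp C₀ * (1 + R') ^ a) (2 ^ a) * (1 + ‖x‖) ^ (-a) :=
          mul_le_mul_of_nonneg_right (le_max_right _ _) (by positivity)

lemma measurable_lap {d : ℕ} (f : Euc d → ℝ) : Measurable (lap f) := by
  unfold lap pd
  exact Finset.measurable_sum _ fun i _ => measurable_fderiv_apply_const ℝ _ _

lemma part3 (M : ℝ) (hM : 0 < M) (φ nS cS : Euc 3 → ℝ)
    (hφb : ∃ C : ℝ, 0 < C ∧ ∀ x, Real.exp (-φ x) ≤ C)
    (hc_eq : ∀ x, cS x = newt 3 nS x)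
    (hnS_nonneg : ∀ x, 0 ≤ nS x)
    (hnS_int : Integrable nS volume)
    (hnS_mass : ∫ x, nS x = M)
    (hnS_exp : ∃ c : ℝ, 0 < c ∧ ∀ x, nS x = c * Real.exp (-cS x - φ x)) :
    ∃ K : ℝ, ∀ x, 0 ≤ cS x ∧ cS x ≤ K := by
  obtain ⟨c, hc, hnce⟩ := hnS_exp
  obtain ⟨Cφ, hCφ, hφb⟩ := hφb
  have hG3 : ∀ z : Euc 3, Gker 3 z = 1 / (4 * Real.pi * ‖z‖) := fun z => by
    rw [Gker]; norm_num
  have hGnonneg : ∀ z : Euc 3, 0 ≤ Gker 3 z := fun z => by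
    rw [hG3]; positivity
  have hcS_nonneg : ∀ x, 0 ≤ cS x := fun x => by
    rw [hc_eq x]
    exact integral_nonneg fun y => mul_nonneg (hGnonneg _) (hnS_nonneg y)
  set C₀ : ℝ := c * Cφ with hC₀
  have hC₀pos : 0 < C₀ := mul_pos hc hCφ
  have hnS_bd : ∀ x, nS x ≤ C₀ := by
    intro x
    rw [hnce x, hC₀]
    calc c * Real.exp (-cS x - φ x) = c * (Real.exp (-cS x) * Real.exp (-φ x)) := by
          rw [← Real.exp_add]; ring_nf
      _ ≤ c * (1 * Cφ) := by
          have h1 : Real.exp (-cS x) ≤ 1 := Real.exp_le_one_iff.2 (by linarith [hcS_nonneg x])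
          exact mul_le_mul_of_nonneg_left
            (mul_le_mul h1 (hφb x) (Real.exp_nonneg _) zero_le_one) hc.le
      _ = c * Cφ := by ring
  set A : ℝ := ∫ z in ball (0 : Euc 3) 1, ‖z‖⁻¹ with hA
  have hA0 : 0 ≤ A := setIntegral_nonneg measurableSet_ball fun z _ => by positivity
  refine ⟨C₀ / (4 * Real.pi) * A + 1 / (4 * Real.pi) * M, fun x => ⟨hcS_nonneg x, ?_⟩⟩
  rw [hc_eq x]
  show (∫ y, Gker 3 (x - y) * nS y) ≤ _
  set g₁ : Euc 3 → ℝ := (ball x 1).indicator (fun y => C₀ / (4 * Real.pi) * ‖x - y‖⁻¹) with hg₁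
  set g₂ : Euc 3 → ℝ := (ball x 1)ᶜ.indicator (fun y => 1 / (4 * Real.pi) * nS y) with hg₂
  have hg₁int : Integrable g₁ volume := by
    have h : IntegrableOn (fun y => C₀ / (4 * Real.pi) * ‖x - y‖⁻¹) (ball x 1) volume :=
      (integrableOn_inv_norm_ball' 3 (by norm_num) x).const_mul _
    exact h.integrable_indicator measurableSet_ball
  have hg₂int : Integrable g₂ volume :=
    (hnS_int.const_mul _).indicator measurableSet_ball.compl
  have hmono : ∀ y, Gker 3 (x - y) * nS y ≤ g₁ y + g₂ y := by
    intro y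
    by_cases hy : y ∈ ball x 1
    · have h2 : g₂ y = 0 := indicator_of_notMem (by simpa using hy) _
      rw [h2, add_zero, hg₁, indicator_of_mem hy, hG3]
      have e1 : 1 / (4 * Real.pi * ‖x - y‖) * nS y = (4 * Real.pi)⁻¹ * ‖x - y‖⁻¹ * nS y := by
        rw [one_div, mul_inv]
      have e2 : C₀ / (4 * Real.pi) * ‖x - y‖⁻¹ = (4 * Real.pi)⁻¹ * ‖x - y‖⁻¹ * C₀ := by
        ring
      rw [e1, e2]
      exact mul_le_mul_of_nonneg_left (hnS_bd y) (by positivity)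
    · have h1 : g₁ y = 0 := indicator_of_notMem hy _
      rw [h1, zero_add, hg₂, indicator_of_mem (by simpa using hy)]
      have hdist : (1:ℝ) ≤ ‖x - y‖ := by
        have := (mem_ball.not.1 hy)
        rw [dist_eq_norm] at this
        have h2 := le_of_not_gt this
        rwa [norm_sub_rev]
      rw [hG3]
      apply mul_le_mul_of_nonneg_right _ (hnS_nonneg y)
      apply div_le_div_of_nonneg_left one_pos.le (by positivity)
      nlinarith [Real.pi_pos]
  calc (∫ y, Gker 3 (x - y) * nS y) ≤ ∫ y, (g₁ y + g₂ y) :=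
        integral_mono_of_nonneg
          (Eventually.of_forall fun y => mul_nonneg (hGnonneg _) (hnS_nonneg y))
          (hg₁int.add hg₂int) (Eventually.of_forall hmono)
    _ = (∫ y, g₁ y) + ∫ y, g₂ y := integral_add hg₁int hg₂int
    _ ≤ C₀ / (4 * Real.pi) * A + 1 / (4 * Real.pi) * M := by
        have e₁ : (∫ y, g₁ y) = C₀ / (4 * Real.pi) * A := by
          rw [hg₁, integral_indicator measurableSet_ball, integral_const_mul _ _,
            integral_inv_norm_ball' 3 x]
        have e₂ : (∫ y, g₂ y) ≤ 1 / (4 * Real.pi) * M := by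
          rw [hg₂, integral_indicator measurableSet_ball.compl, integral_const_mul _ _]
          have := setIntegral_le_integral hnS_int (Eventually.of_forall hnS_nonneg)
            (s := (ball x 1)ᶜ)
          rw [hnS_mass] at this
          exact mul_le_mul_of_nonneg_left this (by positivity)
        linarith

-- auxiliary facts on logarithms
lemma log_sub_abs_le {u v : ℝ} (hu : 0 < u) (hv : 0 < v) :
    |Real.log u - Real.log v| ≤ |u - v| * (u⁻¹ + v⁻¹) := by
  wlog hab : v ≤ u generalizing u v
  · rw [abs_sub_comm, abs_sub_comm u v, add_comm]
    exact this hv hu (le_of_not_ge hab)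
  · have h1 : Real.log u - Real.log v = Real.log (u / v) := (Real.log_div hu.ne' hv.ne').symm
    have h2 : Real.log (u / v) ≤ u / v - 1 := Real.log_le_sub_one_of_pos (div_pos hu hv)
    have h3 : (0:ℝ) ≤ Real.log u - Real.log v := by
      have := Real.log_le_log hv hab
      linarith
    rw [abs_of_nonneg h3, abs_of_nonneg (by linarith : (0:ℝ) ≤ u - v)]
    have h4 : u / v - 1 = (u - v) * v⁻¹ := by field_simp
    have h5 : (u - v) * v⁻¹ ≤ (u - v) * (u⁻¹ + v⁻¹) := by
      apply mul_le_mul_of_nonneg_left _ (by linarith)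
      have : 0 ≤ u⁻¹ := by positivity
      linarith
    calc Real.log u - Real.log v ≤ u / v - 1 := by rw [← h1] at h2; exact h2
      _ = (u - v) * v⁻¹ := h4
      _ ≤ (u - v) * (u⁻¹ + v⁻¹) := h5

lemma log_norm_sub_le (x y : Euc 2) :
    Real.log ‖x - y‖ ≤ Real.log (1 + ‖x‖) + Real.log (1 + ‖y‖) := by
  rcases eq_or_ne x y with rfl | hne
  · simp only [sub_self, norm_zero, Real.log_zero]
    have h1 : (0:ℝ) ≤ Real.log (1 + ‖x‖) := Real.log_nonneg (by linarith [norm_nonneg x])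
    linarith
  · have hpos : 0 < ‖x - y‖ := norm_pos_iff.2 (sub_ne_zero.2 hne)
    have h1 : ‖x - y‖ ≤ (1 + ‖x‖) * (1 + ‖y‖) := by
      have := norm_sub_le x y
      nlinarith [norm_nonneg x, norm_nonneg y]
    calc Real.log ‖x - y‖ ≤ Real.log ((1 + ‖x‖) * (1 + ‖y‖)) := Real.log_le_log hpos h1
      _ = _ := Real.log_mul (by positivity) (by positivity)

lemma part2_Jfinite (M : ℝ) (φ nS cS : Euc 2 → ℝ)
    (hc_eq : ∀ x, cS x = newt 2 nS x)
    (hlap : ∀ x, -lap cS x = nS x)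
    (hnS_pos : ∀ x, 0 < nS x)
    (hnS_meas : Measurable nS)
    (hnS_int : Integrable nS volume) :
    Integrable (fun y => Real.log (1 + ‖y‖) * nS y) volume := by
  have hmeas : Measurable (fun y : Euc 2 => Real.log (1 + ‖y‖) * nS y) :=
    ((Real.measurable_log.comp (measurable_const.add measurable_norm)).mul hnS_meas)
  have hnonneg : ∀ y : Euc 2, 0 ≤ Real.log (1 + ‖y‖) * nS y := fun y =>
    mul_nonneg (Real.log_nonneg (by linarith [norm_nonneg y])) (hnS_pos y).le
  refine ⟨hmeas.aestronglyMeasurable, ?_⟩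
  rw [hasFiniteIntegral_iff_ofReal (Eventually.of_forall hnonneg)]
  by_contra hcon
  have hJinf : ∫⁻ y, ENNReal.ofReal (Real.log (1 + ‖y‖) * nS y) = ∞ := top_le_iff.1 (not_lt.1 hcon)
  have hGval : ∀ z : Euc 2, Gker 2 z = -(1 / (2 * Real.pi)) * Real.log ‖z‖ := fun z => if_pos rfl
  have hnotint : ∀ x : Euc 2, ¬ Integrable (fun y => Gker 2 (x - y) * nS y) volume := by
    intro x hint
    set R : ℝ := max (2 * ‖x‖ + 1) 3 with hRdef
    set S : Set (Euc 2) := {y | R ≤ ‖y‖} with hSdef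
    have hSmeas : MeasurableSet S := (isClosed_le continuous_const continuous_norm).measurableSet
    have hcompl_fin : (∫⁻ y in Sᶜ, ENNReal.ofReal (Real.log (1 + ‖y‖) * nS y)) < ∞ := by
      have hb : ∀ y ∈ Sᶜ, ENNReal.ofReal (Real.log (1 + ‖y‖) * nS y)
          ≤ ENNReal.ofReal (Real.log (1 + R) * nS y) := by
        intro y hy
        apply ENNReal.ofReal_le_ofReal
        apply mul_le_mul_of_nonneg_right _ (hnS_pos y).le
        apply Real.log_le_log (by positivity)
        simp only [hSdef, mem_compl_iff, mem_setOf_eq, not_le] at hy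
        linarith
      have hR0 : (0:ℝ) ≤ Real.log (1 + R) := Real.log_nonneg (by
        have : (3:ℝ) ≤ R := le_max_right _ _
        linarith)
      calc (∫⁻ y in Sᶜ, ENNReal.ofReal (Real.log (1 + ‖y‖) * nS y))
          ≤ ∫⁻ y in Sᶜ, ENNReal.ofReal (Real.log (1 + R) * nS y) :=
            setLIntegral_mono' hSmeas.compl hb
        _ ≤ ∫⁻ y, ENNReal.ofReal (Real.log (1 + R) * nS y) := setLIntegral_le_lintegral _ _
        _ = ∫⁻ y, ENNReal.ofReal (Real.log (1 + R)) * ENNReal.ofReal (nS y) := by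
            congr 1; funext y; rw [ENNReal.ofReal_mul hR0]
        _ = ENNReal.ofReal (Real.log (1 + R)) * ∫⁻ y, ENNReal.ofReal (nS y) :=
            lintegral_const_mul' _ _ ENNReal.ofReal_ne_top
        _ < ∞ := ENNReal.mul_lt_top ENNReal.ofReal_lt_top hnS_int.lintegral_lt_top
    have hStop : (∫⁻ y in S, ENNReal.ofReal (Real.log (1 + ‖y‖) * nS y)) = ∞ := by
      have hsum : (∫⁻ y in S, ENNReal.ofReal (Real.log (1 + ‖y‖) * nS y))
          + (∫⁻ y in Sᶜ, ENNReal.ofReal (Real.log (1 + ‖y‖) * nS y)) = ∞ := by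
        rw [lintegral_add_compl _ hSmeas]; exact hJinf
      rcases ENNReal.add_eq_top.1 hsum with h | h
      · exact h
      · exact absurd h hcompl_fin.ne
    have hfinS : (∫⁻ y in S, ‖Gker 2 (x - y) * nS y‖₊) < ∞ := (hint.restrict (s := S)).2
    have hptwise : ∀ y ∈ S, ENNReal.ofReal (Real.log (1 + ‖y‖) * nS y)
        ≤ ENNReal.ofReal (4 * Real.pi) * ‖Gker 2 (x - y) * nS y‖₊ := by
      intro y hy
      have hy' : R ≤ ‖y‖ := hy
      have hy1 : 2 * ‖x‖ + 1 ≤ ‖y‖ := le_trans (le_max_left _ _) hy'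
      have hy2 : (3:ℝ) ≤ ‖y‖ := le_trans (le_max_right _ _) hy'
      have hxy : (1 + ‖y‖) / 2 ≤ ‖x - y‖ := by
        have h1 : ‖y‖ - ‖x‖ ≤ ‖x - y‖ := by
          calc ‖y‖ - ‖x‖ ≤ |‖x‖ - ‖y‖| := by
                rw [abs_sub_comm]; exact le_abs_self _
            _ ≤ ‖x - y‖ := abs_norm_sub_norm_le x y
        linarith [norm_nonneg x]
      have hxypos : 0 < ‖x - y‖ := lt_of_lt_of_le (by linarith [norm_nonneg y]) hxy
      have hlog2 : Real.log (1 + ‖y‖) ≤ 2 * Real.log ‖x - y‖ := by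
        have h4 : Real.log 4 ≤ Real.log (1 + ‖y‖) := Real.log_le_log (by norm_num) (by linarith)
        have h42 : Real.log 4 = 2 * Real.log 2 := by
          rw [show (4:ℝ) = 2 ^ 2 by norm_num, Real.log_pow]; push_cast; ring
        have hd : Real.log ((1 + ‖y‖) / 2) ≤ Real.log ‖x - y‖ :=
          Real.log_le_log (by positivity) hxy
        rw [Real.log_div (by positivity) (by norm_num)] at hd
        linarith
      have hπ := Real.pi_pos
      have habs : Real.log (1 + ‖y‖) * nS y ≤ 4 * Real.pi * |Gker 2 (x - y) * nS y| := by
        have he : |Gker 2 (x - y) * nS y| = 1 / (2 * Real.pi) * |Real.log ‖x - y‖| * nS y := by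
          rw [hGval, abs_mul, abs_mul, abs_neg,
            abs_of_pos (by positivity : (0:ℝ) < 1 / (2 * Real.pi)), abs_of_pos (hnS_pos y)]
        rw [he]
        have he2 : 4 * Real.pi * (1 / (2 * Real.pi) * |Real.log ‖x - y‖| * nS y)
            = 2 * |Real.log ‖x - y‖| * nS y := by
          field_simp
          ring
        rw [he2]
        apply mul_le_mul_of_nonneg_right _ (hnS_pos y).le
        calc Real.log (1 + ‖y‖) ≤ 2 * Real.log ‖x - y‖ := hlog2
          _ ≤ 2 * |Real.log ‖x - y‖| := by
              have := le_abs_self (Real.log ‖x - y‖); linarith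
      calc ENNReal.ofReal (Real.log (1 + ‖y‖) * nS y)
          ≤ ENNReal.ofReal (4 * Real.pi * |Gker 2 (x - y) * nS y|) :=
            ENNReal.ofReal_le_ofReal habs
        _ = ENNReal.ofReal (4 * Real.pi) * ENNReal.ofReal |Gker 2 (x - y) * nS y| :=
            ENNReal.ofReal_mul (by positivity)
        _ = ENNReal.ofReal (4 * Real.pi) * ‖Gker 2 (x - y) * nS y‖₊ := by
            rw [← Real.norm_eq_abs, ofReal_norm, enorm_eq_nnnorm]
    have hle : (∫⁻ y in S, ENNReal.ofReal (Real.log (1 + ‖y‖) * nS y))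
        ≤ ENNReal.ofReal (4 * Real.pi) * ∫⁻ y in S, ‖Gker 2 (x - y) * nS y‖₊ := by
      calc (∫⁻ y in S, ENNReal.ofReal (Real.log (1 + ‖y‖) * nS y))
          ≤ ∫⁻ y in S, ENNReal.ofReal (4 * Real.pi) * ‖Gker 2 (x - y) * nS y‖₊ :=
            setLIntegral_mono' hSmeas hptwise
        _ = _ := lintegral_const_mul' _ _ ENNReal.ofReal_ne_top
    rw [hStop] at hle
    exact absurd hle (not_le.2 (ENNReal.mul_lt_top ENNReal.ofReal_lt_top hfinS))
  have hcS0 : ∀ z, cS z = 0 := fun z => by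
    rw [hc_eq z]
    exact integral_undef (hnotint z)
  have h0 : nS 0 = 0 := by
    rw [← hlap 0, funext hcS0]
    have hpd : ∀ i : Fin 2, pd i (fun _ : Euc 2 => (0:ℝ)) = fun _ => 0 := by
      intro i; funext z; simp [pd]
    simp [lap, hpd, pd]
  exact absurd h0 (ne_of_gt (hnS_pos 0))

lemma part2_decay (M : ℝ) (hM : 0 < M) (φ nS cS : Euc 2 → ℝ)
    (C a : ℝ) (hC : 0 < C) (ha : 4 + M / (2 * Real.pi) < a)
    (hφb : ∀ x, Real.exp (-φ x) ≤ C * (1 + ‖x‖) ^ (-a))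
    (hc_eq : ∀ x, cS x = newt 2 nS x)
    (hnS_pos : ∀ x, 0 < nS x)
    (hnS_int : Integrable nS volume)
    (hnS_mass : ∫ x, nS x = M)
    (c : ℝ) (hc : 0 < c) (hnce : ∀ x, nS x = c * Real.exp (-cS x - φ x))
    (hJint : Integrable (fun y => Real.log (1 + ‖y‖) * nS y) volume) :
    ∃ C₂ b : ℝ, 0 < C₂ ∧ 4 < b ∧ ∀ y, nS y ≤ C₂ * (1 + ‖y‖) ^ (-b) := by
  have hπ := Real.pi_pos
  set J : ℝ := ∫ y, Real.log (1 + ‖y‖) * nS y with hJ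
  have hJ0 : 0 ≤ J := integral_nonneg fun y =>
    mul_nonneg (Real.log_nonneg (by linarith [norm_nonneg y])) (hnS_pos y).le
  have hGval : ∀ z : Euc 2, Gker 2 z = -(1 / (2 * Real.pi)) * Real.log ‖z‖ := fun z => if_pos rfl
  have hcS_lb : ∀ x, -(1 / (2 * Real.pi)) * (M * Real.log (1 + ‖x‖) + J) ≤ cS x := by
    intro x
    have hLx0 : 0 ≤ Real.log (1 + ‖x‖) := Real.log_nonneg (by linarith [norm_nonneg x])
    have e : (fun y : Euc 2 => Gker 2 (x - y) * nS y)
        = fun y => -(1 / (2 * Real.pi)) * (Real.log ‖x - y‖ * nS y) := by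
      funext y; rw [hGval]; ring
    have e2 : (fun y : Euc 2 => (Real.log (1 + ‖x‖) + Real.log (1 + ‖y‖)) * nS y)
        = fun y => Real.log (1 + ‖x‖) * nS y + Real.log (1 + ‖y‖) * nS y := by
      funext y; ring
    by_cases hk : Integrable (fun y => Gker 2 (x - y) * nS y) volume
    · have hkg : Integrable (fun y => Real.log ‖x - y‖ * nS y) volume := by
        have h2 := hk
        rw [e] at h2
        exact (integrable_const_mul_iff
          (isUnit_iff_ne_zero.2 (neg_ne_zero.2 (by positivity))) _).1 h2
      have hmaj : Integrable (fun y : Euc 2 =>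
          (Real.log (1 + ‖x‖) + Real.log (1 + ‖y‖)) * nS y) volume := by
        rw [e2]
        exact (hnS_int.const_mul _).add hJint
      have hmono : (∫ y, Real.log ‖x - y‖ * nS y)
          ≤ ∫ y, (Real.log (1 + ‖x‖) + Real.log (1 + ‖y‖)) * nS y :=
        integral_mono hkg hmaj fun y =>
          mul_le_mul_of_nonneg_right (log_norm_sub_le x y) (hnS_pos y).le
      have hval : (∫ y, (Real.log (1 + ‖x‖) + Real.log (1 + ‖y‖)) * nS y)
          = M * Real.log (1 + ‖x‖) + J := by
        rw [e2, integral_add (hnS_int.const_mul _) hJint, integral_const_mul, hnS_mass]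
        ring
      rw [hc_eq x]
      show _ ≤ ∫ y, Gker 2 (x - y) * nS y
      rw [e, integral_const_mul]
      rw [hval] at hmono
      exact mul_le_mul_of_nonpos_left hmono (neg_nonpos.2 (by positivity))
    · rw [hc_eq x]
      show _ ≤ ∫ y, Gker 2 (x - y) * nS y
      rw [integral_undef hk]
      have h3 : 0 ≤ M * Real.log (1 + ‖x‖) + J := add_nonneg (mul_nonneg hM.le hLx0) hJ0
      have h4 := mul_nonneg (by positivity : (0:ℝ) ≤ 1 / (2 * Real.pi)) h3
      linarith
  set b : ℝ := a - M / (2 * Real.pi) with hb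
  have hb4 : 4 < b := by
    rw [hb]; linarith
  refine ⟨c * C * Real.exp (J / (2 * Real.pi)), b, by positivity, hb4, fun y => ?_⟩
  have hy1 : (0:ℝ) < 1 + ‖y‖ := by linarith [norm_nonneg y]
  have h1 : Real.exp (-cS y) ≤ Real.exp ((1 / (2 * Real.pi)) * (M * Real.log (1 + ‖y‖) + J)) := by
    apply Real.exp_le_exp.2
    have := hcS_lb y
    linarith
  have h2 : Real.exp ((1 / (2 * Real.pi)) * (M * Real.log (1 + ‖y‖) + J))
      = (1 + ‖y‖) ^ (M / (2 * Real.pi)) * Real.exp (J / (2 * Real.pi)) := by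
    rw [Real.rpow_def_of_pos hy1, ← Real.exp_add]
    congr 1
    field_simp
  calc nS y = c * (Real.exp (-cS y) * Real.exp (-φ y)) := by
        rw [hnce y, ← Real.exp_add]
        ring_nf
    _ ≤ c * (Real.exp ((1 / (2 * Real.pi)) * (M * Real.log (1 + ‖y‖) + J))
          * (C * (1 + ‖y‖) ^ (-a))) := by
        apply mul_le_mul_of_nonneg_left _ hc.le
        exact mul_le_mul h1 (hφb y) (Real.exp_nonneg _) (Real.exp_nonneg _)
    _ = c * C * Real.exp (J / (2 * Real.pi)) * ((1 + ‖y‖) ^ (M / (2 * Real.pi)) * (1 + ‖y‖) ^ (-a)) := by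
        rw [h2]; ring
    _ = c * C * Real.exp (J / (2 * Real.pi)) * (1 + ‖y‖) ^ (-b) := by
        rw [← Real.rpow_add hy1]
        congr 1
        rw [hb]
        ring

lemma part2_kernels (nS : Euc 2 → ℝ) (hnS_pos : ∀ x, 0 < nS x) (hnS_meas : Measurable nS)
    (hnS_int : Integrable nS volume)
    (hJint : Integrable (fun y => Real.log (1 + ‖y‖) * nS y) volume)
    (C₂ : ℝ) (hbd : ∀ y, nS y ≤ C₂) (ξ : Euc 2) :
    Integrable (fun y => Real.log ‖ξ - y‖ * nS y) volume ∧
    Integrable (fun y => ‖ξ - y‖⁻¹ * nS y) volume := by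
  set m : Euc 2 → ℝ := fun y => (ball ξ 1).indicator (fun y => C₂ * ‖ξ - y‖⁻¹) y
    + (Real.log (1 + ‖ξ‖) + Real.log (1 + ‖y‖) + 1) * nS y with hm
  have hm_int : Integrable m volume := by
    apply Integrable.add
    · have h : IntegrableOn (fun y => C₂ * ‖ξ - y‖⁻¹) (ball ξ 1) volume :=
        (integrableOn_inv_norm_ball' 2 le_rfl ξ).const_mul _
      exact h.integrable_indicator measurableSet_ball
    · have e : (fun y : Euc 2 => (Real.log (1 + ‖ξ‖) + Real.log (1 + ‖y‖) + 1) * nS y)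
          = fun y => (Real.log (1 + ‖ξ‖) + 1) * nS y + Real.log (1 + ‖y‖) * nS y := by
        funext y; ring
      rw [e]
      exact (hnS_int.const_mul _).add hJint
  have main : ∀ f : Euc 2 → ℝ, Measurable f →
      (∀ y, y ∈ ball ξ 1 → |f y| ≤ ‖ξ - y‖⁻¹) →
      (∀ y, y ∉ ball ξ 1 → |f y| ≤ Real.log (1 + ‖ξ‖) + Real.log (1 + ‖y‖) + 1) →
      Integrable (fun y => f y * nS y) volume := by
    intro f hf hnear hfar
    apply Integrable.mono' hm_int ((hf.mul hnS_meas).aestronglyMeasurable)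
    apply Eventually.of_forall
    intro y
    have habs : ‖f y * nS y‖ = |f y| * nS y := by
      rw [Real.norm_eq_abs, abs_mul, abs_of_pos (hnS_pos y)]
    rw [Pi.mul_apply, habs]
    show |f y| * nS y ≤ (ball ξ 1).indicator (fun y => C₂ * ‖ξ - y‖⁻¹) y
      + (Real.log (1 + ‖ξ‖) + Real.log (1 + ‖y‖) + 1) * nS y
    have hC₂0 : 0 ≤ C₂ := le_trans (hnS_pos ξ).le (hbd ξ)
    by_cases h1 : y ∈ ball ξ 1
    · have ht : |f y| * nS y ≤ C₂ * ‖ξ - y‖⁻¹ := by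
        calc |f y| * nS y ≤ ‖ξ - y‖⁻¹ * C₂ :=
              mul_le_mul (hnear y h1) (hbd y) (hnS_pos y).le (by positivity)
          _ = C₂ * ‖ξ - y‖⁻¹ := by ring
      have h2 : 0 ≤ (Real.log (1 + ‖ξ‖) + Real.log (1 + ‖y‖) + 1) * nS y := by
        have l1 : (0:ℝ) ≤ Real.log (1 + ‖ξ‖) := Real.log_nonneg (by linarith [norm_nonneg ξ])
        have l2 : (0:ℝ) ≤ Real.log (1 + ‖y‖) := Real.log_nonneg (by linarith [norm_nonneg y])
        have := (hnS_pos y).le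
        positivity
      rw [indicator_of_mem h1]
      linarith
    · have h2 : 0 ≤ (ball ξ 1).indicator (fun y => C₂ * ‖ξ - y‖⁻¹) y :=
        indicator_nonneg (fun z _ => by positivity) y
      have ht : |f y| * nS y ≤ (Real.log (1 + ‖ξ‖) + Real.log (1 + ‖y‖) + 1) * nS y :=
        mul_le_mul_of_nonneg_right (hfar y h1) (hnS_pos y).le
      linarith
  constructor
  · apply main _ (by apply Real.measurable_log.comp; fun_prop : Measurable fun y : Euc 2 => Real.log ‖ξ - y‖)
    · intro y hy
      have hr : ‖ξ - y‖ < 1 := by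
        have := mem_ball.1 hy
        rwa [dist_eq_norm, norm_sub_rev] at this
      by_cases h0 : ‖ξ - y‖ = 0
      · rw [h0]
        simp
      · have hpos : 0 < ‖ξ - y‖ := (norm_nonneg _).lt_of_ne (Ne.symm h0)
        have hlt : Real.log ‖ξ - y‖ < 0 := Real.log_neg hpos hr
        rw [abs_of_neg hlt, ← Real.log_inv]
        have := Real.log_le_sub_one_of_pos (inv_pos.2 hpos)
        linarith
    · intro y hy
      have hr : 1 ≤ ‖ξ - y‖ := by
        rw [mem_ball, dist_eq_norm, norm_sub_rev, not_lt] at hy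
        exact hy
      rw [abs_of_nonneg (Real.log_nonneg hr)]
      linarith [log_norm_sub_le ξ y]
  · apply main _ (by fun_prop : Measurable fun y : Euc 2 => ‖ξ - y‖⁻¹)
    · intro y _
      rw [abs_of_nonneg (by positivity : (0:ℝ) ≤ ‖ξ - y‖⁻¹)]
    · intro y hy
      have hr : 1 ≤ ‖ξ - y‖ := by
        rw [mem_ball, dist_eq_norm, norm_sub_rev, not_lt] at hy
        exact hy
      have l1 : (0:ℝ) ≤ Real.log (1 + ‖ξ‖) := Real.log_nonneg (by linarith [norm_nonneg ξ])
      have l2 : (0:ℝ) ≤ Real.log (1 + ‖y‖) := Real.log_nonneg (by linarith [norm_nonneg y])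
      rw [abs_of_nonneg (by positivity : (0:ℝ) ≤ ‖ξ - y‖⁻¹)]
      have hi : ‖ξ - y‖⁻¹ ≤ 1 := by
        rw [inv_le_one_iff₀]
        right
        exact hr
      linarith

lemma part2_W (M : ℝ) (hM : 0 < M) (nS : Euc 2 → ℝ) (hnS_pos : ∀ x, 0 < nS x)
    (hnS_int : Integrable nS volume)
    (hnS_mass : ∫ x, nS x = M)
    (C₂ b : ℝ) (hC₂ : 0 < C₂) (hb : 4 < b) (hdecay : ∀ y, nS y ≤ C₂ * (1 + ‖y‖) ^ (-b)) :
    ∃ CW : ℝ, 0 < CW ∧ ∀ x ξ : Euc 2, ξ ∈ ball x 1 →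
      (∫ y, ‖ξ - y‖⁻¹ * nS y) ≤ CW * (1 + ‖x‖) ^ (-(1:ℝ)) := by
  set A₂ : ℝ := ∫ z in ball (0 : Euc 2) 1, ‖z‖⁻¹ with hA₂
  have hA₂0 : 0 ≤ A₂ := setIntegral_nonneg measurableSet_ball fun z _ => by positivity
  set B₂ : ℝ := (volume (ball (0 : Euc 2) 1)).toReal with hB₂
  have hB₂0 : 0 ≤ B₂ := ENNReal.toReal_nonneg
  set D : ℝ := C₂ * 6 ^ b with hD
  have hD0 : 0 < D := by rw [hD]; positivity
  refine ⟨D * A₂ + D * B₂ / 4 + 2 * M + 1, by positivity, fun x ξ hξ => ?_⟩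
  have h1X : (0:ℝ) < 1 + ‖x‖ := by linarith [norm_nonneg x]
  set r : ℝ := (1 + ‖x‖) / 2 with hr
  have hr0 : 0 < r := by rw [hr]; positivity
  have hxξ : ‖x - ξ‖ < 1 := by
    have := mem_ball.1 hξ
    rwa [dist_eq_norm, norm_sub_rev] at this
  have key1 : ∀ y : Euc 2, (‖ξ - y‖ < r ∨ ‖ξ - y‖ < 1) → nS y ≤ D * (1 + ‖x‖) ^ (-b) := by
    intro y hy
    have hxiy : ‖ξ - y‖ < 1 + r := by
      rcases hy with h | h
      · linarith
      · linarith
    have h6 : 1 + ‖x‖ ≤ 6 * (1 + ‖y‖) := by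
      have t1 : ‖x‖ ≤ ‖x - ξ‖ + ‖ξ - y‖ + ‖y‖ := by
        calc ‖x‖ = ‖(x - ξ) + ((ξ - y) + y)‖ := by congr 1; abel
          _ ≤ ‖x - ξ‖ + ‖(ξ - y) + y‖ := norm_add_le _ _
          _ ≤ ‖x - ξ‖ + (‖ξ - y‖ + ‖y‖) := by linarith [norm_add_le (ξ - y) y]
          _ = ‖x - ξ‖ + ‖ξ - y‖ + ‖y‖ := by ring
      rw [hr] at hxiy
      linarith [norm_nonneg y]
    calc nS y ≤ C₂ * (1 + ‖y‖) ^ (-b) := hdecay y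
      _ ≤ C₂ * (6 ^ b * (1 + ‖x‖) ^ (-b)) := by
          apply mul_le_mul_of_nonneg_left _ hC₂.le
          have h7 : ((1 + ‖x‖) / 6 : ℝ) ≤ 1 + ‖y‖ := by linarith
          have h8 : (1 + ‖y‖ : ℝ) ^ (-b) ≤ ((1 + ‖x‖) / 6) ^ (-b) :=
            Real.rpow_le_rpow_of_nonpos (by positivity) h7 (by linarith)
          have h9 : ((1 + ‖x‖) / 6 : ℝ) ^ (-b) = 6 ^ b * (1 + ‖x‖) ^ (-b) := by
            rw [Real.div_rpow h1X.le (by norm_num : (0:ℝ) ≤ 6),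
              Real.rpow_neg (by norm_num : (0:ℝ) ≤ 6), div_inv_eq_mul]
            ring
          rw [h9] at h8
          exact h8
      _ = D * (1 + ‖x‖) ^ (-b) := by rw [hD]; ring
  set g₁ : Euc 2 → ℝ := (ball ξ 1).indicator (fun y => D * (1 + ‖x‖) ^ (-b) * ‖ξ - y‖⁻¹) with hg₁
  set g₂ : Euc 2 → ℝ := (ball ξ r \ ball ξ 1).indicator (fun _ => D * (1 + ‖x‖) ^ (-b)) with hg₂
  set g₃ : Euc 2 → ℝ := (ball ξ r)ᶜ.indicator (fun y => r⁻¹ * nS y) with hg₃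
  have hg₁int : Integrable g₁ volume := by
    have h : IntegrableOn (fun y => D * (1 + ‖x‖) ^ (-b) * ‖ξ - y‖⁻¹) (ball ξ 1) volume :=
      (integrableOn_inv_norm_ball' 2 le_rfl ξ).const_mul _
    exact h.integrable_indicator measurableSet_ball
  have hg₂int : Integrable g₂ volume := by
    have h : IntegrableOn (fun _ : Euc 2 => D * (1 + ‖x‖) ^ (-b)) (ball ξ r \ ball ξ 1) volume := by
      refine integrableOn_const ?_
      exact (lt_of_le_of_lt (measure_mono diff_subset) measure_ball_lt_top).ne
    exact h.integrable_indicator (measurableSet_ball.diff measurableSet_ball)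
  have hg₃int : Integrable g₃ volume := (hnS_int.const_mul _).indicator measurableSet_ball.compl
  have hfmono : ∀ y, ‖ξ - y‖⁻¹ * nS y ≤ g₁ y + g₂ y + g₃ y := by
    intro y
    have hg₁nn : 0 ≤ g₁ y := indicator_nonneg (fun z _ => by positivity) y
    have hg₂nn : 0 ≤ g₂ y := indicator_nonneg (fun z _ => by positivity) y
    have hg₃nn : 0 ≤ g₃ y :=
      indicator_nonneg (fun z _ => mul_nonneg (by positivity) (hnS_pos z).le) y
    by_cases h1 : y ∈ ball ξ 1
    · have hb1 : ‖ξ - y‖ < 1 := by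
        have := mem_ball.1 h1
        rwa [dist_eq_norm, norm_sub_rev] at this
      have ht : ‖ξ - y‖⁻¹ * nS y ≤ g₁ y := by
        rw [hg₁, indicator_of_mem h1]
        have hny : nS y ≤ D * (1 + ‖x‖) ^ (-b) := key1 y (Or.inr hb1)
        calc ‖ξ - y‖⁻¹ * nS y ≤ ‖ξ - y‖⁻¹ * (D * (1 + ‖x‖) ^ (-b)) :=
              mul_le_mul_of_nonneg_left hny (by positivity)
          _ = D * (1 + ‖x‖) ^ (-b) * ‖ξ - y‖⁻¹ := by ring
      linarith
    · have hb1 : 1 ≤ ‖ξ - y‖ := by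
        rw [mem_ball, dist_eq_norm, norm_sub_rev, not_lt] at h1
        exact h1
      by_cases h2 : y ∈ ball ξ r
      · have ht : ‖ξ - y‖⁻¹ * nS y ≤ g₂ y := by
          rw [hg₂, indicator_of_mem (show y ∈ ball ξ r \ ball ξ 1 from ⟨h2, h1⟩)]
          have hbr : ‖ξ - y‖ < r := by
            have := mem_ball.1 h2
            rwa [dist_eq_norm, norm_sub_rev] at this
          have hny : nS y ≤ D * (1 + ‖x‖) ^ (-b) := key1 y (Or.inl hbr)
          have hinv : ‖ξ - y‖⁻¹ ≤ 1 := by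
            rw [inv_le_one_iff₀]; right; exact hb1
          calc ‖ξ - y‖⁻¹ * nS y ≤ 1 * nS y :=
                mul_le_mul_of_nonneg_right hinv (hnS_pos y).le
            _ = nS y := one_mul _
            _ ≤ D * (1 + ‖x‖) ^ (-b) := hny
        linarith
      · have hrr : r ≤ ‖ξ - y‖ := by
          rw [mem_ball, dist_eq_norm, norm_sub_rev, not_lt] at h2
          exact h2
        have ht : ‖ξ - y‖⁻¹ * nS y ≤ g₃ y := by
          rw [hg₃, indicator_of_mem (mem_compl h2)]
          exact mul_le_mul_of_nonneg_right (inv_anti₀ hr0 hrr) (hnS_pos y).le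
        linarith
  have hint_le : (∫ y, ‖ξ - y‖⁻¹ * nS y) ≤ (∫ y, g₁ y) + (∫ y, g₂ y) + ∫ y, g₃ y := by
    calc (∫ y, ‖ξ - y‖⁻¹ * nS y) ≤ ∫ y, (g₁ y + g₂ y + g₃ y) :=
          integral_mono_of_nonneg
            (Eventually.of_forall fun y => mul_nonneg (by positivity) (hnS_pos y).le)
            ((hg₁int.add hg₂int).add hg₃int) (Eventually.of_forall hfmono)
      _ = (∫ y, g₁ y) + (∫ y, g₂ y) + ∫ y, g₃ y := by
          have h12 : Integrable (fun y => g₁ y + g₂ y) volume := hg₁int.add hg₂int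
          rw [integral_add h12 hg₃int, integral_add hg₁int hg₂int]
  have e₁ : (∫ y, g₁ y) = D * (1 + ‖x‖) ^ (-b) * A₂ := by
    rw [hg₁, integral_indicator measurableSet_ball, integral_const_mul,
      integral_inv_norm_ball' 2 ξ]
  have e₂ : (∫ y, g₂ y) ≤ D * (1 + ‖x‖) ^ (-b) * (r ^ 2 * B₂) := by
    rw [hg₂, integral_indicator (measurableSet_ball.diff measurableSet_ball), setIntegral_const,
      smul_eq_mul]
    have hv : (volume (ball ξ r \ ball ξ 1)).toReal ≤ r ^ 2 * B₂ := by
      have hle : volume (ball ξ r \ ball ξ 1) ≤ volume (ball ξ r) := measure_mono diff_subset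
      have hval : volume (ball ξ r) = ENNReal.ofReal (r ^ 2) * volume (ball (0 : Euc 2) 1) := by
        rw [Measure.addHaar_ball volume ξ hr0.le]
        congr 2
        simp [finrank_euclideanSpace_fin]
      calc (volume (ball ξ r \ ball ξ 1)).toReal
          ≤ (volume (ball ξ r)).toReal :=
            ENNReal.toReal_mono (ne_of_lt measure_ball_lt_top) hle
        _ = r ^ 2 * B₂ := by
            rw [hval, ENNReal.toReal_mul, ENNReal.toReal_ofReal (by positivity)]
    calc (volume (ball ξ r \ ball ξ 1)).toReal * (D * (1 + ‖x‖) ^ (-b))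
        ≤ r ^ 2 * B₂ * (D * (1 + ‖x‖) ^ (-b)) :=
          mul_le_mul_of_nonneg_right hv (by positivity)
      _ = D * (1 + ‖x‖) ^ (-b) * (r ^ 2 * B₂) := by ring
  have e₃ : (∫ y, g₃ y) ≤ r⁻¹ * M := by
    rw [hg₃, integral_indicator measurableSet_ball.compl, integral_const_mul]
    apply mul_le_mul_of_nonneg_left _ (by positivity)
    have h := setIntegral_le_integral hnS_int (Eventually.of_forall fun y => (hnS_pos y).le)
      (s := (ball ξ r)ᶜ)
    rwa [hnS_mass] at h
  have hX1 : (1:ℝ) ≤ 1 + ‖x‖ := by linarith [norm_nonneg x]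
  have hrpow1 : (1 + ‖x‖ : ℝ) ^ (-b) ≤ (1 + ‖x‖) ^ (-(1:ℝ)) :=
    Real.rpow_le_rpow_of_exponent_le hX1 (by linarith)
  have hr1' : D * (1 + ‖x‖) ^ (-b) * A₂ ≤ D * A₂ * (1 + ‖x‖) ^ (-(1:ℝ)) := by
    calc D * (1 + ‖x‖) ^ (-b) * A₂ = D * A₂ * (1 + ‖x‖) ^ (-b) := by ring
      _ ≤ D * A₂ * (1 + ‖x‖) ^ (-(1:ℝ)) := mul_le_mul_of_nonneg_left hrpow1 (by positivity)
  have hr2 : D * (1 + ‖x‖) ^ (-b) * (r ^ 2 * B₂) ≤ D * B₂ / 4 * (1 + ‖x‖) ^ (-(1:ℝ)) := by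
    have hrsq : r ^ 2 = (1 + ‖x‖) ^ 2 / 4 := by rw [hr]; ring
    have h2b : (1 + ‖x‖ : ℝ) ^ (-b) * (1 + ‖x‖) ^ (2:ℕ) = (1 + ‖x‖) ^ (2 - b) := by
      rw [← Real.rpow_natCast (1 + ‖x‖) 2, ← Real.rpow_add h1X]
      congr 1
      push_cast
      ring
    calc D * (1 + ‖x‖) ^ (-b) * (r ^ 2 * B₂)
        = D * B₂ / 4 * ((1 + ‖x‖) ^ (-b) * (1 + ‖x‖) ^ (2:ℕ)) := by rw [hrsq]; ring
      _ = D * B₂ / 4 * (1 + ‖x‖) ^ (2 - b) := by rw [h2b]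
      _ ≤ D * B₂ / 4 * (1 + ‖x‖) ^ (-(1:ℝ)) :=
          mul_le_mul_of_nonneg_left
            (Real.rpow_le_rpow_of_exponent_le hX1 (by linarith)) (by positivity)
  have hr3 : r⁻¹ * M ≤ 2 * M * (1 + ‖x‖) ^ (-(1:ℝ)) := by
    have he : r⁻¹ * M = 2 * M * (1 + ‖x‖)⁻¹ := by
      rw [hr, inv_div]
      ring
    rw [Real.rpow_neg_one]
    exact le_of_eq he
  have hlast : (0:ℝ) ≤ (1 + ‖x‖) ^ (-(1:ℝ)) := by positivity
  linarith [hint_le, e₂, e₃]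


lemma part2_grad (nS cS : Euc 2 → ℝ)
    (hc_eq : ∀ x, cS x = newt 2 nS x)
    (hnS_pos : ∀ x, 0 < nS x)
    (hker : ∀ ξ : Euc 2, Integrable (fun y => Real.log ‖ξ - y‖ * nS y) volume)
    (hriesz : ∀ ξ : Euc 2, Integrable (fun y => ‖ξ - y‖⁻¹ * nS y) volume)
    (CW : ℝ) (hCW : 0 < CW)
    (hW : ∀ x ξ : Euc 2, ξ ∈ ball x 1 →
      (∫ y, ‖ξ - y‖⁻¹ * nS y) ≤ CW * (1 + ‖x‖) ^ (-(1:ℝ))) :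
    ∀ x : Euc 2, ‖gradient cS x‖ ≤ (CW / Real.pi) * (1 + ‖x‖) ^ (-(1:ℝ)) := by
  intro x
  have hπ := Real.pi_pos
  have hGval : ∀ z : Euc 2, Gker 2 z = -(1 / (2 * Real.pi)) * Real.log ‖z‖ := fun z => if_pos rfl
  set Kc : ℝ := (CW / Real.pi) * (1 + ‖x‖) ^ (-(1:ℝ)) with hKc
  have hKc0 : 0 ≤ Kc := by rw [hKc]; positivity
  have hint : ∀ ζ : Euc 2, Integrable (fun y => Gker 2 (ζ - y) * nS y) volume := by
    intro ζ
    have e : (fun y : Euc 2 => Gker 2 (ζ - y) * nS y)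
        = fun y => -(1 / (2 * Real.pi)) * (Real.log ‖ζ - y‖ * nS y) := by
      funext y; rw [hGval]; ring
    rw [e]
    exact (hker ζ).const_mul _
  have hlip : ∀ ξ ∈ ball x 1, ∀ ξ' ∈ ball x 1, |cS ξ - cS ξ'| ≤ Kc * ‖ξ - ξ'‖ := by
    intro ξ hξ ξ' hξ'
    have hsub : cS ξ - cS ξ' = ∫ y, (Gker 2 (ξ - y) * nS y - Gker 2 (ξ' - y) * nS y) := by
      rw [hc_eq ξ, hc_eq ξ']
      exact (integral_sub (hint ξ) (hint ξ')).symm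
    set maj : Euc 2 → ℝ := fun y =>
      (1 / (2 * Real.pi)) * ‖ξ - ξ'‖ * (‖ξ - y‖⁻¹ * nS y + ‖ξ' - y‖⁻¹ * nS y) with hmaj
    have hmaj_int : Integrable maj volume := by
      have h : Integrable (fun y => ‖ξ - y‖⁻¹ * nS y + ‖ξ' - y‖⁻¹ * nS y) volume :=
        (hriesz ξ).add (hriesz ξ')
      exact h.const_mul _
    have hptw : ∀ᵐ y ∂(volume : Measure (Euc 2)),
        ‖Gker 2 (ξ - y) * nS y - Gker 2 (ξ' - y) * nS y‖ ≤ maj y := by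
      have hzero : volume ({ξ, ξ'} : Set (Euc 2)) = 0 :=
        Set.Finite.measure_zero (Set.toFinite _) volume
      filter_upwards [compl_mem_ae_iff.2 hzero] with y hy
      have hyξ : y ≠ ξ := fun h => hy (by rw [h]; exact Set.mem_insert ξ {ξ'})
      have hyξ' : y ≠ ξ' := fun h => hy (by rw [h]; exact Set.mem_insert_of_mem ξ rfl)
      have h₁ : 0 < ‖ξ - y‖ := norm_pos_iff.2 (sub_ne_zero.2 (Ne.symm hyξ))
      have h₂ : 0 < ‖ξ' - y‖ := norm_pos_iff.2 (sub_ne_zero.2 (Ne.symm hyξ'))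
      have e1 : Gker 2 (ξ - y) * nS y - Gker 2 (ξ' - y) * nS y
          = -(1 / (2 * Real.pi)) * ((Real.log ‖ξ - y‖ - Real.log ‖ξ' - y‖) * nS y) := by
        rw [hGval, hGval]; ring
      rw [e1, Real.norm_eq_abs, abs_mul, abs_mul, abs_neg,
        abs_of_pos (by positivity : (0:ℝ) < 1 / (2 * Real.pi)), abs_of_pos (hnS_pos y)]
      have hlog := log_sub_abs_le h₁ h₂
      have hnrm : |‖ξ - y‖ - ‖ξ' - y‖| ≤ ‖ξ - ξ'‖ := by
        have := abs_norm_sub_norm_le (ξ - y) (ξ' - y)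
        rwa [sub_sub_sub_cancel_right] at this
      have hstep : |Real.log ‖ξ - y‖ - Real.log ‖ξ' - y‖|
          ≤ ‖ξ - ξ'‖ * (‖ξ - y‖⁻¹ + ‖ξ' - y‖⁻¹) := by
        calc |Real.log ‖ξ - y‖ - Real.log ‖ξ' - y‖|
            ≤ |‖ξ - y‖ - ‖ξ' - y‖| * (‖ξ - y‖⁻¹ + ‖ξ' - y‖⁻¹) := hlog
          _ ≤ ‖ξ - ξ'‖ * (‖ξ - y‖⁻¹ + ‖ξ' - y‖⁻¹) :=
              mul_le_mul_of_nonneg_right hnrm (by positivity)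
      rw [hmaj]
      have hfin : 1 / (2 * Real.pi) * (|Real.log ‖ξ - y‖ - Real.log ‖ξ' - y‖| * nS y)
          ≤ 1 / (2 * Real.pi) * ((‖ξ - ξ'‖ * (‖ξ - y‖⁻¹ + ‖ξ' - y‖⁻¹)) * nS y) := by
        apply mul_le_mul_of_nonneg_left _ (by positivity)
        exact mul_le_mul_of_nonneg_right hstep (hnS_pos y).le
      calc 1 / (2 * Real.pi) * (|Real.log ‖ξ - y‖ - Real.log ‖ξ' - y‖| * nS y)
          ≤ 1 / (2 * Real.pi) * ((‖ξ - ξ'‖ * (‖ξ - y‖⁻¹ + ‖ξ' - y‖⁻¹)) * nS y) := hfin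
        _ = 1 / (2 * Real.pi) * ‖ξ - ξ'‖ * (‖ξ - y‖⁻¹ * nS y + ‖ξ' - y‖⁻¹ * nS y) := by ring
    have habs : |cS ξ - cS ξ'| ≤ ∫ y, maj y := by
      rw [hsub, ← Real.norm_eq_abs]
      exact norm_integral_le_of_norm_le hmaj_int hptw
    have hmaj_val : (∫ y, maj y) = (1 / (2 * Real.pi)) * ‖ξ - ξ'‖
        * ((∫ y, ‖ξ - y‖⁻¹ * nS y) + ∫ y, ‖ξ' - y‖⁻¹ * nS y) := by
      rw [hmaj, integral_const_mul, integral_add (hriesz ξ) (hriesz ξ')]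
    have hW1 := hW x ξ hξ
    have hW2 := hW x ξ' hξ'
    have hsum : (∫ y, ‖ξ - y‖⁻¹ * nS y) + (∫ y, ‖ξ' - y‖⁻¹ * nS y)
        ≤ 2 * (CW * (1 + ‖x‖) ^ (-(1:ℝ))) := by linarith
    have hfinal : (1 / (2 * Real.pi)) * ‖ξ - ξ'‖
        * ((∫ y, ‖ξ - y‖⁻¹ * nS y) + ∫ y, ‖ξ' - y‖⁻¹ * nS y)
        ≤ (1 / (2 * Real.pi)) * ‖ξ - ξ'‖ * (2 * (CW * (1 + ‖x‖) ^ (-(1:ℝ)))) :=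
      mul_le_mul_of_nonneg_left hsum (by positivity)
    have heq : (1 / (2 * Real.pi)) * ‖ξ - ξ'‖ * (2 * (CW * (1 + ‖x‖) ^ (-(1:ℝ))))
        = Kc * ‖ξ - ξ'‖ := by
      rw [hKc]
      field_simp
    calc |cS ξ - cS ξ'| ≤ ∫ y, maj y := habs
      _ = _ := hmaj_val
      _ ≤ (1 / (2 * Real.pi)) * ‖ξ - ξ'‖ * (2 * (CW * (1 + ‖x‖) ^ (-(1:ℝ)))) := hfinal
      _ = Kc * ‖ξ - ξ'‖ := heq
  have hlipOn : LipschitzOnWith (Real.toNNReal Kc) cS (ball x 1) := by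
    apply LipschitzOnWith.of_dist_le_mul
    intro ξ hξ ξ' hξ'
    rw [Real.dist_eq, dist_eq_norm, Real.coe_toNNReal _ hKc0]
    exact hlip ξ hξ ξ' hξ'
  have hfd : ‖fderiv ℝ cS x‖ ≤ (Real.toNNReal Kc : ℝ) :=
    norm_fderiv_le_of_lipschitzOn ℝ (ball_mem_nhds x one_pos) hlipOn
  rw [Real.coe_toNNReal _ hKc0] at hfd
  have hgr : ‖gradient cS x‖ = ‖fderiv ℝ cS x‖ := by
    unfold gradient
    exact LinearIsometryEquiv.norm_map _ _
  rw [hgr]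
  exact hfd

lemma part2 (M : ℝ) (hM : 0 < M) (φ nS cS : Euc 2 → ℝ)
    (hφb : ∃ C a : ℝ, 0 < C ∧ 4 + M / (2 * Real.pi) < a ∧
      ∀ x, Real.exp (-φ x) ≤ C * (1 + ‖x‖) ^ (-a))
    (hc_eq : ∀ x, cS x = newt 2 nS x)
    (hlap : ∀ x, -lap cS x = nS x)
    (hnS_pos : ∀ x, 0 < nS x)
    (hnS_meas : Measurable nS)
    (hnS_int : Integrable nS volume)
    (hnS_mass : ∫ x, nS x = M)
    (hnS_exp : ∃ c : ℝ, 0 < c ∧ ∀ x, nS x = c * Real.exp (-cS x - φ x)) :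
    ∀ q : ℝ≥0∞, 2 < q → MemLp (fun x => gradient cS x) q volume := by
  intro q hq
  obtain ⟨C, a, hC, ha, hφb⟩ := hφb
  obtain ⟨c, hc, hnce⟩ := hnS_exp
  have hJint := part2_Jfinite M φ nS cS hc_eq hlap hnS_pos hnS_meas hnS_int
  obtain ⟨C₂, b, hC₂, hb4, hdecay⟩ :=
    part2_decay M hM φ nS cS C a hC ha hφb hc_eq hnS_pos hnS_int hnS_mass c hc hnce hJint
  have hbd : ∀ y, nS y ≤ C₂ := by
    intro y
    have h1 : (1 + ‖y‖ : ℝ) ^ (-b) ≤ 1 :=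
      Real.rpow_le_one_of_one_le_of_nonpos (by linarith [norm_nonneg y]) (by linarith)
    calc nS y ≤ C₂ * (1 + ‖y‖) ^ (-b) := hdecay y
      _ ≤ C₂ * 1 := mul_le_mul_of_nonneg_left h1 hC₂.le
      _ = C₂ := mul_one _
  have hker := fun ξ => (part2_kernels nS hnS_pos hnS_meas hnS_int hJint C₂ hbd ξ).1
  have hriesz := fun ξ => (part2_kernels nS hnS_pos hnS_meas hnS_int hJint C₂ hbd ξ).2
  obtain ⟨CW, hCW, hW⟩ := part2_W M hM nS hnS_pos hnS_int hnS_mass C₂ b hC₂ hb4 hdecay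
  have hgrad := part2_grad nS cS hc_eq hnS_pos hker hriesz CW hCW hW
  have hmeas_grad : AEStronglyMeasurable (fun x : Euc 2 => gradient cS x) volume := by
    have hm : Measurable (fun x : Euc 2 => gradient cS x) := by
      unfold gradient
      exact (LinearIsometryEquiv.continuous _).measurable.comp (measurable_fderiv ℝ cS)
    exact hm.aestronglyMeasurable
  have hπ := Real.pi_pos
  rcases eq_or_ne q ∞ with rfl | hqt
  · apply memLp_top_of_bound hmeas_grad (CW / Real.pi)
    apply Eventually.of_forall
    intro x
    calc ‖gradient cS x‖ ≤ (CW / Real.pi) * (1 + ‖x‖) ^ (-(1:ℝ)) := hgrad x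
      _ ≤ (CW / Real.pi) * 1 :=
          mul_le_mul_of_nonneg_left
            (Real.rpow_le_one_of_one_le_of_nonpos (by linarith [norm_nonneg x]) (by norm_num))
            (by positivity)
      _ = CW / Real.pi := mul_one _
  · set p : ℝ := q.toReal with hp
    have hq0 : q ≠ 0 := by
      intro h
      rw [h] at hq
      exact absurd hq (by simp)
    have hp2 : 2 < p := by
      rw [hp]
      have h2 : ((2:ℝ≥0∞)).toReal = 2 := by simp
      rw [← h2]
      exact ENNReal.toReal_strict_mono hqt hq
    have hgmeas : AEStronglyMeasurable
        (fun x : Euc 2 => (CW / Real.pi) * (1 + ‖x‖) ^ (-(1:ℝ))) volume := by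
      apply Measurable.aestronglyMeasurable
      exact ((measurable_const.add measurable_norm).pow_const _).const_mul _ |>.mono le_rfl le_rfl
    have hg_mem : MemLp (fun x : Euc 2 => (CW / Real.pi) * (1 + ‖x‖) ^ (-(1:ℝ))) q volume := by
      apply (memLp_norm_rpow_iff hgmeas hq0 hqt).mp
      rw [ENNReal.div_self hq0 hqt, memLp_one_iff_integrable]
      have heq : (fun x : Euc 2 => ‖(CW / Real.pi) * (1 + ‖x‖) ^ (-(1:ℝ))‖ ^ p)
          = fun x => (CW / Real.pi) ^ p * (1 + ‖x‖) ^ (-p) := by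
        funext x
        rw [Real.norm_eq_abs, abs_of_nonneg (by positivity),
          Real.mul_rpow (by positivity) (by positivity), ← Real.rpow_mul (by positivity), neg_one_mul]
      show Integrable (fun x : Euc 2 => ‖(CW / Real.pi) * (1 + ‖x‖) ^ (-(1:ℝ))‖ ^ p) volume
      rw [heq]
      have hfr : (Module.finrank ℝ (Euc 2) : ℝ) < p := by
        rw [finrank_euclideanSpace_fin]
        exact_mod_cast hp2
      exact (integrable_one_add_norm hfr).const_mul _
    apply MemLp.of_le hg_mem hmeas_grad
    apply Eventually.of_forall
    intro x
    calc ‖gradient cS x‖ ≤ (CW / Real.pi) * (1 + ‖x‖) ^ (-(1:ℝ)) := hgrad x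
      _ ≤ ‖(CW / Real.pi) * (1 + ‖x‖) ^ (-(1:ℝ))‖ := le_abs_self _

/-- Regularity of the stationary solution: `c∞` is bounded (and nonnegative) if `d = 3`,
and `∇c∞ ∈ L^q(ℝ²)` for every `q ∈ (2, +∞]` if `d = 2`. -/
theorem steadyState_potential_bounds
    (d : ℕ) (hd : d = 2 ∨ d = 3) (M : ℝ) (hM : 0 < M)
    (φ : Euc d → ℝ) (hφ : ConfC d M φ)
    (nS cS : Euc d → ℝ) (hsteady : IsSteadyState d M φ nS cS) :
    (d = 3 → ∃ K : ℝ, ∀ x, 0 ≤ cS x ∧ cS x ≤ K)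
    ∧ (d = 2 → ∀ q : ℝ≥0∞, 2 < q → MemLp (fun x => gradient cS x) q volume) := by

  obtain ⟨hc_eq, hlap, hnS⟩ := hsteady
  set I : ℝ := ∫ y, Real.exp (-cS y - φ y) with hI
  by_cases hI0 : I = 0
  · -- degenerate case: nS = 0, cS = 0
    have hnS0 : ∀ x, nS x = 0 := fun x => by rw [hnS x, hI0, div_zero]
    have hcS0 : ∀ x, cS x = 0 := fun x => by
      rw [hc_eq x]; unfold newt; simp only [hnS0, mul_zero, integral_zero]
    constructor
    · intro _; exact ⟨0, fun x => ⟨(hcS0 x).ge, (hcS0 x).le⟩⟩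
    · intro _ q _
      have h0 : (fun x => gradient cS x) = fun _ => (0 : Euc d) := by
        funext x
        rw [funext hcS0]
        exact gradient_const x 0
      rw [h0]
      exact MemLp.zero
  · have hInt : Integrable (fun y => Real.exp (-cS y - φ y)) volume := by
      by_contra hcon
      exact hI0 (hI.trans (integral_undef hcon))
    have hIpos : 0 < I :=
      lt_of_le_of_ne (hI ▸ integral_nonneg fun y => (Real.exp_pos _).le) (Ne.symm hI0)
    have hnS_eq : ∀ x, nS x = (M / I) * Real.exp (-cS x - φ x) := fun x => by
      rw [hnS x]; ring
    have hMI : 0 < M / I := div_pos hM hIpos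
    have hnS_pos : ∀ x, 0 < nS x := fun x => by
      rw [hnS_eq x]; positivity
    have hnS_fun : nS = fun x => (M / I) * Real.exp (-cS x - φ x) := funext hnS_eq
    have hnS_int : Integrable nS volume := by rw [hnS_fun]; exact hInt.const_mul _
    have hnS_mass : ∫ x, nS x = M := by
      rw [hnS_fun, integral_const_mul, ← hI, div_mul_cancel₀ M hI0]
    have hnS_meas : Measurable nS := by
      have h : nS = fun x => -lap cS x := funext fun x => (hlap x).symm
      rw [h]
      exact (measurable_lap cS).neg
    have hnS_exp : ∃ c : ℝ, 0 < c ∧ ∀ x, nS x = c * Real.exp (-cS x - φ x) :=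
      ⟨M / I, hMI, hnS_eq⟩
    have hφcont : Continuous φ := hφ.1.continuous
    constructor
    · intro hd3
      subst hd3
      obtain ⟨a, ha3, haev⟩ := hφ.2.2.2.1
      have ha0 : (0:ℝ) ≤ a := le_of_lt (lt_of_le_of_lt (by norm_num) ha3)
      obtain ⟨C, hC, hCb⟩ := exp_neg_phi_bound 3 hφcont ha0 haev
      refine part3 M hM φ nS cS ⟨C, hC, fun x => ?_⟩ hc_eq
        (fun x => (hnS_pos x).le) hnS_int hnS_mass hnS_exp
      calc Real.exp (-φ x) ≤ C * (1 + ‖x‖) ^ (-a) := hCb x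
        _ ≤ C * 1 := by
            apply mul_le_mul_of_nonneg_left _ hC.le
            exact Real.rpow_le_one_of_one_le_of_nonpos (by linarith [norm_nonneg x]) (by linarith)
        _ = C := mul_one C
    · intro hd2
      subst hd2
      obtain ⟨a, ha4, haev⟩ := hφ.2.2.2.2.2.2 rfl
      have hπ : 0 < Real.pi := Real.pi_pos
      have ha0 : (0:ℝ) ≤ a := by
        have : 0 < M / (2 * Real.pi) := by positivity
        linarith
      obtain ⟨C, hC, hCb⟩ := exp_neg_phi_bound 2 hφcont ha0 haev
      exact part2 M hM φ nS cS ⟨C, a, hC, ha4, hCb⟩ hc_eq hlap hnS_pos hnS_meas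
        hnS_int hnS_mass hnS_exp
end
end

section
/- Let μ > 0 and let Φ : (0, ∞) → ℝ be a twice differentiable function satisfying Φ''(s) + (μ/2) Φ'(s) − (1/(2s)) Φ(s) Φ'(s) = 0 for all s > 0. Then the function φ(s) := s Φ'(s) satisfies the linearized equation φ''(s) + ((μ s − Φ(s))/(2s)) φ'(s) + ((λ − 2 Φ'(s))/(4s)) φ(s) = 0 for all s > 0 with λ = 2μ; that is, λ = 2μ is an eigenvalue of the linearized operator in the radial cumulated-density formulation. -/
open Set

/-- If `Φ` solves the cumulated-density ODE `Φ'' + (μ/2)Φ' − (1/(2s))ΦΦ' = 0` on `(0,∞)`,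
then `φ(s) = s Φ'(s)` solves the linearized equation
`φ'' + ((μs − Φ)/(2s))φ' + ((λ − 2Φ')/(4s))φ = 0` with `λ = 2μ`:
`λ = 2μ` is an eigenvalue of the linearized operator in the radial cumulated-density
formulation. -/
theorem eigenvalue_two_mu_radial
    (μ lam : ℝ) (hμ : 0 < μ) (hlam : lam = 2 * μ)
    (Φ : ℝ → ℝ) (hreg : ContDiffOn ℝ 3 Φ (Ioi 0))
    (hODE : ∀ s > (0:ℝ),
      deriv (deriv Φ) s + μ / 2 * deriv Φ s - 1 / (2 * s) * Φ s * deriv Φ s = 0) :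
    ∀ s > (0:ℝ),
      deriv (deriv (fun r => r * deriv Φ r)) s
        + (μ * s - Φ s) / (2 * s) * deriv (fun r => r * deriv Φ r) s
        + (lam - 2 * deriv Φ s) / (4 * s) * (s * deriv Φ s) = 0 := by
  intro s hs
  have hsne : s ≠ 0 := ne_of_gt hs
  have hmem : Ioi (0:ℝ) ∈ nhds s := isOpen_Ioi.mem_nhds hs
  have hreg2 : ContDiffOn ℝ 2 (deriv Φ) (Ioi 0) :=
    hreg.deriv_of_isOpen isOpen_Ioi (by norm_num)
  have hreg3 : ContDiffOn ℝ 1 (deriv (deriv Φ)) (Ioi 0) :=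
    hreg2.deriv_of_isOpen isOpen_Ioi (by norm_num)
  have hd1 : ∀ x ∈ Ioi (0:ℝ), DifferentiableAt ℝ Φ x := fun x hx =>
    (hreg.contDiffAt (isOpen_Ioi.mem_nhds hx)).differentiableAt (by norm_num)
  have hd2 : ∀ x ∈ Ioi (0:ℝ), DifferentiableAt ℝ (deriv Φ) x := fun x hx =>
    (hreg2.contDiffAt (isOpen_Ioi.mem_nhds hx)).differentiableAt (by norm_num)
  have hd3 : DifferentiableAt ℝ (deriv (deriv Φ)) s :=
    (hreg3.contDiffAt hmem).differentiableAt (by norm_num)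
  -- first derivative of φ on a neighborhood
  have hEq1 : (fun x => deriv Φ x + x * deriv (deriv Φ) x)
      =ᶠ[nhds s] deriv (fun r => r * deriv Φ r) := by
    filter_upwards [hmem] with x hx
    rw [deriv_fun_mul differentiableAt_fun_id (hd2 x hx)]
    simp
  have hφ1 : deriv (fun r => r * deriv Φ r) s = deriv Φ s + s * deriv (deriv Φ) s :=
    (hEq1.eq_of_nhds).symm
  -- second derivative of φ at s
  have hφ2 : deriv (deriv (fun r => r * deriv Φ r)) s
      = 2 * deriv (deriv Φ) s + s * deriv (deriv (deriv Φ)) s := by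
    rw [← hEq1.deriv_eq]
    rw [deriv_fun_add (g := fun x => x * deriv (deriv Φ) x) (hd2 s hs) (differentiableAt_fun_id.mul hd3),
      deriv_fun_mul differentiableAt_fun_id hd3]
    simp
    ring
  -- third derivative of Φ from the ODE
  have hEq3 : deriv (deriv Φ)
      =ᶠ[nhds s] fun x => 1 / (2 * x) * Φ x * deriv Φ x - μ / 2 * deriv Φ x := by
    filter_upwards [hmem] with x hx
    have := hODE x hx
    linarith
  have h2x : HasDerivAt (fun x : ℝ => 1 / (2 * x)) (-(2) / (2 * s) ^ 2) s := by
    have h := ((hasDerivAt_id s).const_mul (2:ℝ)).inv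
      (by simpa using mul_ne_zero two_ne_zero hsne)
    simp only [mul_one] at h
    simpa [one_div, Pi.inv_def] using h
  have hΦ : HasDerivAt Φ (deriv Φ s) s := (hd1 s hs).hasDerivAt
  have hΦ' : HasDerivAt (deriv Φ) (deriv (deriv Φ) s) s := (hd2 s hs).hasDerivAt
  have hRHS : HasDerivAt
      (fun x => 1 / (2 * x) * Φ x * deriv Φ x - μ / 2 * deriv Φ x)
      (((-(2) / (2 * s) ^ 2) * Φ s + 1 / (2 * s) * deriv Φ s) * deriv Φ s
        + (1 / (2 * s) * Φ s) * deriv (deriv Φ) s - μ / 2 * deriv (deriv Φ) s) s := by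
    exact ((h2x.mul hΦ).mul hΦ').sub (hΦ'.const_mul (μ / 2))
  have hφ3 : deriv (deriv (deriv Φ)) s
      = ((-(2) / (2 * s) ^ 2) * Φ s + 1 / (2 * s) * deriv Φ s) * deriv Φ s
        + (1 / (2 * s) * Φ s) * deriv (deriv Φ) s - μ / 2 * deriv (deriv Φ) s := by
    rw [hEq3.deriv_eq]
    exact hRHS.deriv
  have hode := hODE s hs
  have hP2 : deriv (deriv Φ) s
      = 1 / (2 * s) * Φ s * deriv Φ s - μ / 2 * deriv Φ s := by linarith
  rw [hφ2, hφ1, hφ3, hP2, hlam]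
  field_simp
  ring
end

section
/- Let μ > 0 and let n_∞, c_∞ : (0, ∞) → ℝ be twice (respectively three times) differentiable radial profiles satisfying −c_∞''(r) − c_∞'(r)/r = n_∞(r) and n_∞'(r) + (μ r + c_∞'(r)) n_∞(r) = 0 for all r > 0. Then the functions f(r) := μ r + c_∞'(r) and G(r) := −c_∞'(r) satisfy, for all r > 0, the k = 1 spherical-harmonics eigenvalue system: −f'' − f'/r + f/r² + (μ r + c_∞')(f' + G') + n_∞ f = μ f and −G'' − G'/r + G/r² = n_∞ f; that is, λ = μ is an eigenvalue on the first non-radial mode. -/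
open Set

/-- On the first non-radial spherical harmonic mode (`k = 1`), `λ = μ` is an eigenvalue:
if the radial profiles satisfy the Poisson equation `−c∞'' − c∞'/r = n∞` and the force
balance `n∞' + (μr + c∞') n∞ = 0`, then `f = μr + c∞'` and `G = −c∞'` solve the `k = 1`
eigenvalue system with eigenvalue `μ`. -/
theorem eigenvalue_mu_first_mode
    (μ : ℝ) (hμ : 0 < μ)
    (nS cS : ℝ → ℝ)
    (hnreg : ContDiffOn ℝ 2 nS (Ioi 0)) (hcreg : ContDiffOn ℝ 3 cS (Ioi 0))
    (hPoisson : ∀ r > (0:ℝ), -deriv (deriv cS) r - deriv cS r / r = nS r)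
    (hForce : ∀ r > (0:ℝ), deriv nS r + (μ * r + deriv cS r) * nS r = 0) :
    ∀ r > (0:ℝ),
      (-deriv (deriv (fun s => μ * s + deriv cS s)) r
          - deriv (fun s => μ * s + deriv cS s) r / r
          + (μ * r + deriv cS r) / r ^ 2
          + (μ * r + deriv cS r) *
              (deriv (fun s => μ * s + deriv cS s) r + deriv (fun s => -deriv cS s) r)
          + nS r * (μ * r + deriv cS r)
        = μ * (μ * r + deriv cS r))
      ∧ (-deriv (deriv (fun s => -deriv cS s)) r
          - deriv (fun s => -deriv cS s) r / r
          + (-deriv cS r) / r ^ 2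
        = nS r * (μ * r + deriv cS r)) := by
  -- regularity of derivatives
  have hc1 : ContDiffOn ℝ 2 (deriv cS) (Ioi 0) := by
    have := hcreg.deriv_of_isOpen isOpen_Ioi (m := 2) (by norm_num)
    exact this
  have hc2 : ContDiffOn ℝ 1 (deriv (deriv cS)) (Ioi 0) := by
    have := hc1.deriv_of_isOpen isOpen_Ioi (m := 1) (by norm_num)
    exact this
  intro r hr
  have hrne : r ≠ 0 := ne_of_gt hr
  have hmem : Ioi (0:ℝ) ∈ nhds r := isOpen_Ioi.mem_nhds hr
  have hd1 : ∀ s ∈ Ioi (0:ℝ), DifferentiableAt ℝ (deriv cS) s := fun s hs =>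
    (hc1.contDiffAt (isOpen_Ioi.mem_nhds hs)).differentiableAt (by norm_num)
  have hd2 : ∀ s ∈ Ioi (0:ℝ), DifferentiableAt ℝ (deriv (deriv cS)) s := fun s hs =>
    (hc2.contDiffAt (isOpen_Ioi.mem_nhds hs)).differentiableAt (by norm_num)
  -- first derivatives of f and G
  have hfG : ∀ s ∈ Ioi (0:ℝ),
      deriv (fun t => μ * t + deriv cS t) s = μ + deriv (deriv cS) s := by
    intro s hs
    rw [deriv_fun_add (by fun_prop) (hd1 s hs), deriv_const_mul _ differentiableAt_id]
    simp
  have hG1 : ∀ s ∈ Ioi (0:ℝ),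
      deriv (fun t => -deriv cS t) s = -deriv (deriv cS) s := by
    intro s hs
    exact deriv.neg
  -- second derivatives
  have hf2 : deriv (deriv (fun t => μ * t + deriv cS t)) r = deriv (deriv (deriv cS)) r := by
    have he : deriv (fun t => μ * t + deriv cS t) =ᶠ[nhds r]
        (fun s => μ + deriv (deriv cS) s) :=
      Filter.eventuallyEq_of_mem hmem hfG
    rw [he.deriv_eq, deriv_const_add]
  have hG2 : deriv (deriv (fun t => -deriv cS t)) r = -deriv (deriv (deriv cS)) r := by
    have he : deriv (fun t => -deriv cS t) =ᶠ[nhds r]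
        (fun s => -deriv (deriv cS) s) :=
      Filter.eventuallyEq_of_mem hmem hG1
    rw [he.deriv_eq, deriv.fun_neg]
  -- differentiate the Poisson equation
  have hnd : deriv nS r = -deriv (deriv (deriv cS)) r
      - (deriv (deriv cS) r * r - deriv cS r) / r ^ 2 := by
    have he : nS =ᶠ[nhds r]
        (fun s => -deriv (deriv cS) s - deriv cS s / s) :=
      Filter.eventuallyEq_of_mem hmem (fun s hs => (hPoisson s hs).symm)
    rw [he.deriv_eq]
    rw [deriv_fun_sub (f := fun s => -deriv (deriv cS) s) (g := fun s => deriv cS s / s) ((hd2 r hr).neg) ((hd1 r hr).div differentiableAt_fun_id hrne),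
      deriv.fun_neg, deriv_fun_div (hd1 r hr) differentiableAt_fun_id hrne]
    simp [sq]
  have hP := hPoisson r hr
  have hF := hForce r hr
  rw [hnd] at hF
  have hF' : -deriv (deriv (deriv cS)) r * r ^ 2 - deriv (deriv cS) r * r + deriv cS r
      + (μ * r + deriv cS r) * nS r * r ^ 2 = 0 := by
    field_simp at hF
    linarith [hF]
  constructor
  · rw [hf2, hfG r hr, hG1 r hr]
    field_simp
    linear_combination hF'
  · rw [hG2, hG1 r hr]
    field_simp
    linear_combination (-1) * hF'
end
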